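/- arXiv:1812.07377 — 3 statements merged into one kernel-verified Lean document; each statement's English description precedes it below -/
import Mathlib

section
/- In the (j,m)-balanced redistricting game, the second player can force a tie: there is a strategy for Player 2 ensuring that at the end of the game exactly j bins are majority-white and exactly j bins are majority-black. -/
/-- A move in the `(j,m)`-balanced redistricting game: a color
(`true` = white, `false` = black) together with one of the `2*j` bins. -/
abbrev Move (j : ℕ) := Bool × Fin (2*j)

/-- A strategy: given the history of moves (most recent first), produce a move. -/
abbrev Strat (j : ℕ) := List (Move j) → Move j

/-- The history after `n` moves when Player 1 (moving at even steps) plays `s1`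
and Player 2 plays `s2`.  Most recent move first. -/
def hist (j : ℕ) (s1 s2 : Strat j) : ℕ → List (Move j)
  | 0 => []
  | n+1 =>
      (if n % 2 = 0 then s1 (hist j s1 s2 n) else s2 (hist j s1 s2 n)) :: hist j s1 s2 n

/-- A move `mv` is legal after history `h`: a ball of that color remains
(there are `j*(2*m+1)` balls of each color) and the chosen bin is not full
(each bin has capacity `2*m+1`). -/
def legalMove (j m : ℕ) (h : List (Move j)) (mv : Move j) : Prop :=
  h.countP (fun x => x.1 == mv.1) < j * (2*m+1) ∧
  h.countP (fun x => x.2 == mv.2) < 2*m+1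

/-- Player 1 always plays legally throughout the `2*j*(2*m+1)` moves. -/
def p1Legal (j m : ℕ) (s1 s2 : Strat j) : Prop :=
  ∀ n < 2*j*(2*m+1), n % 2 = 0 →
    legalMove j m (hist j s1 s2 n) (s1 (hist j s1 s2 n))

/-- Player 2 always plays legally throughout the `2*j*(2*m+1)` moves. -/
def p2Legal (j m : ℕ) (s1 s2 : Strat j) : Prop :=
  ∀ n < 2*j*(2*m+1), n % 2 = 1 →
    legalMove j m (hist j s1 s2 n) (s2 (hist j s1 s2 n))

/-- Number of white balls in bin `b` according to history `h`. -/
def whitesIn (j : ℕ) (h : List (Move j)) (b : Fin (2*j)) : ℕ :=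
  h.countP (fun x => x.1 == true && x.2 == b)

/-- Number of black balls in bin `b` according to history `h`. -/
def blacksIn (j : ℕ) (h : List (Move j)) (b : Fin (2*j)) : ℕ :=
  h.countP (fun x => x.1 == false && x.2 == b)

/-- The final history: all `2*j*(2*m+1)` balls have been placed. -/
def finalHist (j m : ℕ) (s1 s2 : Strat j) : List (Move j) :=
  hist j s1 s2 (2*j*(2*m+1))

/-- Number of majority-white bins (at least `m+1` white balls). -/
def majWhiteCount (j m : ℕ) (h : List (Move j)) : ℕ :=
  (Finset.univ.filter (fun b : Fin (2*j) => m+1 ≤ whitesIn j h b)).card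

/-- Number of majority-black bins (at least `m+1` black balls). -/
def majBlackCount (j m : ℕ) (h : List (Move j)) : ℕ :=
  (Finset.univ.filter (fun b : Fin (2*j) => m+1 ≤ blacksIn j h b)).card

namespace P2Tie

def partner (j : ℕ) (b : Fin (2*j)) : Fin (2*j) :=
  if h : b.val % 2 = 0 then ⟨b.val + 1, by have := b.isLt; omega⟩
  else ⟨b.val - 1, by have := b.isLt; omega⟩

lemma partner_val (j : ℕ) (b : Fin (2*j)) :
    (partner j b).val = if b.val % 2 = 0 then b.val + 1 else b.val - 1 := by
  unfold partner; split <;> simp_all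

lemma partner_invol (j : ℕ) (b : Fin (2*j)) : partner j (partner j b) = b := by
  have hb := b.isLt
  apply Fin.ext
  simp only [partner_val]
  split_ifs <;> omega

lemma partner_ne (j : ℕ) (b : Fin (2*j)) : partner j b ≠ b := by
  have hb := b.isLt
  intro h
  have := congrArg Fin.val h
  simp only [partner_val] at this
  split_ifs at this <;> omega

lemma partner_inj (j : ℕ) {a b : Fin (2*j)} (h : partner j a = partner j b) : a = b := by
  have := congrArg (partner j) h
  rwa [partner_invol, partner_invol] at this

lemma partner_eq_iff (j : ℕ) {a b : Fin (2*j)} : partner j a = b ↔ a = partner j b := by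
  constructor
  · rintro rfl; rw [partner_invol]
  · rintro rfl; rw [partner_invol]

def s2strat (j : ℕ) (hj : 0 < j) : Strat j := fun h =>
  match h with
  | [] => (true, ⟨0, by omega⟩)
  | mv :: _ => (!mv.1, partner j mv.2)

lemma s2strat_cons (j : ℕ) (hj : 0 < j) (mv : Move j) (h : List (Move j)) :
    s2strat j hj (mv :: h) = (!mv.1, partner j mv.2) := rfl

end P2Tie
namespace P2Tie

lemma fill_eq (j : ℕ) (h : List (Move j)) (b : Fin (2*j)) :
    h.countP (fun x => x.2 == b) = whitesIn j h b + blacksIn j h b := by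
  induction h with
  | nil => simp [whitesIn, blacksIn]
  | cons a l ih =>
    simp only [whitesIn, blacksIn, List.countP_cons] at ih ⊢
    by_cases hab : a.2 = b <;> cases ha : a.1 <;>
      simp [hab, ha] at ih ⊢ <;> omega

lemma sum_fill (j : ℕ) (h : List (Move j)) :
    ∑ b : Fin (2*j), h.countP (fun x => x.2 == b) = h.length := by
  induction h with
  | nil => simp
  | cons a l ih =>
    simp only [List.countP_cons, List.length_cons, Finset.sum_add_distrib, ih]
    have : ∑ b : Fin (2*j), (if (a.2 == b) = true then 1 else 0) = 1 := by
      simp [beq_iff_eq]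
    omega

lemma hist_length (j : ℕ) (s1 s2 : Strat j) (n : ℕ) :
    (hist j s1 s2 n).length = n := by
  induction n with
  | zero => rfl
  | succ n ih => rw [hist]; simp [ih]

lemma hist_even_succ (j : ℕ) (s1 s2 : Strat j) (t : ℕ) :
    hist j s1 s2 (2*t+1) = s1 (hist j s1 s2 (2*t)) :: hist j s1 s2 (2*t) := by
  rw [hist]; simp [Nat.mul_mod_right]

lemma hist_odd_succ (j : ℕ) (s1 s2 : Strat j) (t : ℕ) :
    hist j s1 s2 (2*t+2) = s2 (hist j s1 s2 (2*t+1)) :: hist j s1 s2 (2*t+1) := by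
  rw [show 2*t+2 = (2*t+1)+1 from rfl, hist]
  have : (2*t+1) % 2 = 1 := by omega
  simp [this]

end P2Tie

namespace P2Tie

def Inv (j m : ℕ) (h : List (Move j)) (t : ℕ) : Prop :=
  h.countP (fun x => x.1 == true) = t ∧
  h.countP (fun x => x.1 == false) = t ∧
  (∀ b, whitesIn j h b = blacksIn j h (partner j b)) ∧
  (∀ b, h.countP (fun x => x.2 == b) ≤ 2*m+1)

lemma fill_partner (j : ℕ) (h : List (Move j))
    (B : ∀ b, whitesIn j h b = blacksIn j h (partner j b)) (b : Fin (2*j)) :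
    h.countP (fun x => x.2 == partner j b) = h.countP (fun x => x.2 == b) := by
  rw [fill_eq, fill_eq]
  have h1 := B b
  have h2 := B (partner j b)
  rw [partner_invol] at h2
  omega

lemma invariant (j m : ℕ) (hj : 0 < j) (s1 : Strat j)
    (hleg : p1Legal j m s1 (s2strat j hj)) :
    ∀ t, t ≤ j*(2*m+1) → Inv j m (hist j s1 (s2strat j hj) (2*t)) t := by
  intro t
  induction t with
  | zero =>
    intro _
    show Inv j m (hist j s1 (s2strat j hj) 0) 0
    exact ⟨rfl, rfl, fun b => rfl, fun b => Nat.zero_le _⟩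
  | succ t ih =>
    intro ht
    have hN : 2*j*(2*m+1) = 2*(j*(2*m+1)) := by ring
    obtain ⟨A, A', B, C⟩ := ih (by omega)
    set h := hist j s1 (s2strat j hj) (2*t) with hh
    obtain ⟨L1, L2⟩ := hleg (2*t) (by omega) (by omega)
    rw [← hh] at L1 L2
    set mv := s1 h with hmv
    have e1 : hist j s1 (s2strat j hj) (2*t+1) = mv :: h := hist_even_succ j s1 _ t
    have e2 : hist j s1 (s2strat j hj) (2*(t+1)) = (!mv.1, partner j mv.2) :: mv :: h := by
      rw [show 2*(t+1) = 2*t+2 by ring, hist_odd_succ, e1, s2strat_cons]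
    rw [e2]
    have hfillp : h.countP (fun x => x.2 == partner j mv.2) < 2*m+1 := by
      rw [fill_partner j h B]; exact L2
    refine ⟨?_, ?_, ?_, ?_⟩
    · have A2 : List.countP (fun x => x.1) h = t := by simpa using A
      simp only [List.countP_cons]
      cases hc : mv.1 <;> simp [hc, A, A2]
    · have A2' : List.countP (fun x => !x.1) h = t := by simpa using A'
      simp only [List.countP_cons]
      cases hc : mv.1 <;> simp [hc, A', A2']
    · intro b
      have hBb := B b
      simp only [whitesIn, blacksIn, List.countP_cons] at hBb ⊢
      simp at hBb ⊢
      cases hc : mv.1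
      · by_cases hb : mv.2 = partner j b
        · have hpb : partner j mv.2 = b := by rw [hb, partner_invol]
          simp [hc, hb, hpb, partner_invol]
          omega
        · have hpb : partner j mv.2 ≠ b := fun h' => hb (by rw [← h', partner_invol])
          simp [hc, hb, hpb] <;> omega
      · by_cases hb : mv.2 = b
        · have hpb : partner j mv.2 = partner j b := by rw [hb]
          simp [hc, hb, hpb] <;> omega
        · have hpb : partner j mv.2 ≠ partner j b := fun h' => hb (partner_inj j h')
          simp [hc, hb, hpb] <;> omega
    · intro b
      have hCb := C b
      simp only [List.countP_cons, beq_iff_eq]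
      by_cases hb1 : mv.2 = b
      · subst hb1
        have hb2 : partner j mv.2 ≠ mv.2 := partner_ne j mv.2
        simp [hb2]
        omega
      · by_cases hb2 : partner j mv.2 = b
        · subst hb2
          have hx : mv.2 ≠ partner j mv.2 := fun h' => partner_ne j mv.2 h'.symm
          simp [hx]
          omega
        · simp [hb1, hb2]
          omega

end P2Tie

namespace P2Tie

lemma p2legal (j m : ℕ) (hj : 0 < j) (s1 : Strat j)
    (hleg : p1Legal j m s1 (s2strat j hj)) :
    p2Legal j m s1 (s2strat j hj) := by
  intro n hn hodd
  obtain ⟨t, rfl⟩ : ∃ t, n = 2*t+1 := ⟨n/2, by omega⟩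
  have hN : 2*j*(2*m+1) = 2*(j*(2*m+1)) := by ring
  have htN : t < j*(2*m+1) := by omega
  obtain ⟨A, A', B, C⟩ := invariant j m hj s1 hleg t htN.le
  obtain ⟨L1, L2⟩ := hleg (2*t) (by omega) (by omega)
  rw [hist_even_succ, s2strat_cons]
  set h := hist j s1 (s2strat j hj) (2*t) with hh
  set mv := s1 h with hmv
  constructor
  · show List.countP (fun x => x.1 == !mv.1) (mv :: h) < j*(2*m+1)
    rw [List.countP_cons]
    have hne : (mv.1 == !mv.1) = false := by cases hcv : mv.1 <;> simp [hcv]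
    simp only [hne, Bool.false_eq_true, if_false, add_zero]
    cases hcv : mv.1
    · simp only [hcv, Bool.not_false]
      omega
    · simp only [hcv, Bool.not_true]
      omega
  · show List.countP (fun x => x.2 == partner j mv.2) (mv :: h) < 2*m+1
    rw [List.countP_cons]
    have hne : (mv.2 == partner j mv.2) = false := by
      rw [beq_eq_false_iff_ne]
      exact (partner_ne j mv.2).symm
    simp only [hne, Bool.false_eq_true, if_false, add_zero]
    have hfp := fill_partner j h B mv.2
    omega

lemma final_counts (j m : ℕ) (hj : 0 < j) (hm : 0 < m) (s1 : Strat j)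
    (hleg : p1Legal j m s1 (s2strat j hj)) :
    majWhiteCount j m (finalHist j m s1 (s2strat j hj)) = j ∧
    majBlackCount j m (finalHist j m s1 (s2strat j hj)) = j := by
  have hN : 2*j*(2*m+1) = 2*(j*(2*m+1)) := by ring
  obtain ⟨A, A', B, C⟩ := invariant j m hj s1 hleg (j*(2*m+1)) le_rfl
  set H := hist j s1 (s2strat j hj) (2*(j*(2*m+1))) with hH
  have hfin : finalHist j m s1 (s2strat j hj) = H := by
    rw [finalHist, hN, hH]
  rw [hfin]
  have hlen : H.length = 2*(j*(2*m+1)) := hist_length _ _ _ _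
  have hsum : ∑ b : Fin (2*j), H.countP (fun x => x.2 == b) = 2*(j*(2*m+1)) := by
    rw [sum_fill, hlen]
  have hfull : ∀ b : Fin (2*j), H.countP (fun x => x.2 == b) = 2*m+1 := by
    by_contra hcon
    push_neg at hcon
    obtain ⟨b0, hb0⟩ := hcon
    have hb0' : H.countP (fun x => x.2 == b0) < 2*m+1 := lt_of_le_of_ne (C b0) hb0
    have hlt : ∑ b : Fin (2*j), H.countP (fun x => x.2 == b) <
        ∑ _b : Fin (2*j), (2*m+1) :=
      Finset.sum_lt_sum (fun i _ => C i) ⟨b0, Finset.mem_univ b0, hb0'⟩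
    rw [hsum, Finset.sum_const, Finset.card_univ, Fintype.card_fin, smul_eq_mul,
      show (2*j)*(2*m+1) = 2*(j*(2*m+1)) by ring] at hlt
    exact lt_irrefl _ hlt
  have hwb : ∀ b, whitesIn j H b + blacksIn j H b = 2*m+1 := by
    intro b; rw [← fill_eq]; exact hfull b
  have hkey : ∀ b, whitesIn j H (partner j b) = 2*m+1 - whitesIn j H b := by
    intro b
    have h1 := B (partner j b)
    rw [partner_invol] at h1
    have h2 := hwb b
    omega
  have hbl : ∀ b, blacksIn j H b = whitesIn j H (partner j b) := by
    intro b
    have h1 := B (partner j b)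
    rw [partner_invol] at h1
    exact h1.symm
  set S := Finset.univ.filter (fun b : Fin (2*j) => m+1 ≤ whitesIn j H b) with hS
  have hcompl : Finset.univ.filter (fun b : Fin (2*j) => ¬ (m+1 ≤ whitesIn j H b))
      = S.image (partner j) := by
    ext b
    simp only [hS, Finset.mem_image, Finset.mem_filter, Finset.mem_univ, true_and]
    constructor
    · intro hb
      refine ⟨partner j b, ?_, partner_invol j b⟩
      have h1 := hkey b
      have h2 := hwb b
      omega
    · rintro ⟨a, ha, rfl⟩
      have h1 := hkey a
      have h2 := hwb a
      omega
  have hcard1 : (S.image (partner j)).card = S.card :=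
    Finset.card_image_of_injective S (fun a b hab => partner_inj j hab)
  have hcard2 : (Finset.univ.filter (fun b : Fin (2*j) => ¬ (m+1 ≤ whitesIn j H b))).card
      = 2*j - S.card := by
    rw [Finset.filter_not, Finset.card_sdiff_of_subset (Finset.filter_subset _ _)]
    simp [Finset.card_univ, hS]
  have hSle : S.card ≤ 2*j := by
    have := Finset.card_filter_le (Finset.univ : Finset (Fin (2*j)))
      (fun b => m+1 ≤ whitesIn j H b)
    exact le_of_le_of_eq this (by simp [Finset.card_univ])
  have hcardS : S.card = j := by
    have heq : 2*j - S.card = S.card := by rw [← hcard2, hcompl, hcard1]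
    omega
  constructor
  · exact hcardS
  · have hBset : Finset.univ.filter (fun b : Fin (2*j) => m+1 ≤ blacksIn j H b)
        = Finset.univ.filter (fun b : Fin (2*j) => ¬ (m+1 ≤ whitesIn j H b)) := by
      ext b
      simp only [Finset.mem_filter, Finset.mem_univ, true_and]
      have h1 := hbl b
      have h2 := hkey b
      have h3 := hwb b
      omega
    rw [majBlackCount, hBset, hcard2, hcardS]
    omega

end P2Tie

/-- In the `(j,m)`-balanced redistricting game, Player 2 can
force a tie: there is a strategy for Player 2 such that against any legally
playing Player 1, Player 2's moves are all legal and at the end exactly `j`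
bins are majority-white and exactly `j` bins are majority-black. -/
theorem player2_forces_tie (j m : ℕ) (hj : 0 < j) (hm : 0 < m) :
    ∃ s2 : Strat j, ∀ s1 : Strat j,
      p1Legal j m s1 s2 →
      p2Legal j m s1 s2 ∧
      majWhiteCount j m (finalHist j m s1 s2) = j ∧
      majBlackCount j m (finalHist j m s1 s2) = j := by
  refine ⟨P2Tie.s2strat j hj, fun s1 hleg => ?_⟩
  exact ⟨P2Tie.p2legal j m hj s1 hleg,
    (P2Tie.final_counts j m hj hm s1 hleg).1,
    (P2Tie.final_counts j m hj hm s1 hleg).2⟩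
end

section
/- In the (1,m)-balanced redistricting game (two bins, each of capacity 2m+1, with 2m+1 white and 2m+1 black balls), Player 1 can always guarantee that at least one bin is majority-white; hence the game ends in a tie under optimal play for every m >= 1. -/
def b0 : Fin (2*1) := ⟨0, by omega⟩
def b1 : Fin (2*1) := ⟨1, by omega⟩

lemma fin2 (b : Fin (2*1)) : b = b0 ∨ b = b1 := by
  rcases b with ⟨bv, hb⟩
  interval_cases bv
  · exact Or.inl rfl
  · exact Or.inr rfl

def ok (m : ℕ) (h : List (Move 1)) : Prop :=
  h.countP (fun x => x.1 == true) ≤ 2*m+1 ∧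
  h.countP (fun x => x.1 == false) ≤ 2*m+1 ∧
  h.countP (fun x => x.2 == b0) ≤ 2*m+1 ∧
  h.countP (fun x => x.2 == b1) ≤ 2*m+1

lemma count_color (h : List (Move 1)) :
    h.countP (fun x => x.1 == true) + h.countP (fun x => x.1 == false) = h.length := by
  induction h with
  | nil => simp
  | cons x t ih =>
    rcases x with ⟨c, b⟩
    cases c <;> simp_all [List.countP_cons] <;> omega

lemma count_bin (h : List (Move 1)) :
    h.countP (fun x => x.2 == b0) + h.countP (fun x => x.2 == b1) = h.length := by
  induction h with
  | nil => simp
  | cons x t ih =>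
    rcases x with ⟨c, b⟩
    rcases fin2 b with hb | hb <;> subst hb <;> simp_all [List.countP_cons, b0, b1, Fin.ext_iff] <;> omega

lemma ok_cons (m : ℕ) (h : List (Move 1)) (mv : Move 1) (hok : ok m h)
    (hl : legalMove 1 m h mv) : ok m (mv :: h) := by
  obtain ⟨h1, h2, h3, h4⟩ := hok
  obtain ⟨l1, l2⟩ := hl
  rcases mv with ⟨c, b⟩
  simp only [one_mul] at l1
  rcases fin2 b with hb | hb <;> subst hb <;> cases c <;>
    refine ⟨?_, ?_, ?_, ?_⟩ <;>
    simp_all [ok, List.countP_cons, b0, b1, Fin.ext_iff] <;> omega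

def greedy (m : ℕ) : Strat 1 := fun h =>
  (decide (h.countP (fun x => x.1 == true) < 2*m+1),
   if h.countP (fun x => x.2 == b0) < 2*m+1 then b0 else b1)

lemma greedy_legal (m : ℕ) (h : List (Move 1)) (hok : ok m h)
    (hlen : h.length < 2*1*(2*m+1)) : legalMove 1 m h (greedy m h) := by
  obtain ⟨h1, h2, h3, h4⟩ := hok
  have hc := count_color h
  have hb := count_bin h
  constructor
  · show h.countP (fun x => x.1 == (greedy m h).1) < 1*(2*m+1)
    rw [one_mul]
    by_cases hw : h.countP (fun x => x.1 == true) < 2*m+1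
    · have hg : (greedy m h).1 = true := decide_eq_true hw
      rw [hg]; exact hw
    · have hg : (greedy m h).1 = false := decide_eq_false hw
      rw [hg]; omega
  · show h.countP (fun x => x.2 == (greedy m h).2) < 2*m+1
    by_cases hw : h.countP (fun x => x.2 == b0) < 2*m+1
    · have hg : (greedy m h).2 = b0 := if_pos hw
      rw [hg]; exact hw
    · have hg : (greedy m h).2 = b1 := if_neg hw
      rw [hg]; omega

lemma hist_ok (m : ℕ) (s1 s2 : Strat 1)
    (H : ∀ n < 2*1*(2*m+1), ok m (hist 1 s1 s2 n) → (hist 1 s1 s2 n).length = n →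
        legalMove 1 m (hist 1 s1 s2 n)
          (if n % 2 = 0 then s1 (hist 1 s1 s2 n) else s2 (hist 1 s1 s2 n))) :
    ∀ n ≤ 2*1*(2*m+1), ok m (hist 1 s1 s2 n) ∧ (hist 1 s1 s2 n).length = n ∧
      ∀ k < n, legalMove 1 m (hist 1 s1 s2 k)
        (if k % 2 = 0 then s1 (hist 1 s1 s2 k) else s2 (hist 1 s1 s2 k)) := by
  intro n
  induction n with
  | zero => intro _; refine ⟨⟨?_, ?_, ?_, ?_⟩, rfl, by omega⟩ <;> simp [hist]
  | succ n ih =>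
    intro hn
    obtain ⟨hok, hlen, hleg⟩ := ih (by omega)
    have hmv := H n (by omega) hok hlen
    refine ⟨ok_cons m _ _ hok hmv, by simp [hist, hlen], ?_⟩
    intro k hk
    rcases Nat.lt_succ_iff_lt_or_eq.mp hk with h' | h'
    · exact hleg k h'
    · subst h'; exact hmv

lemma whites_split (h : List (Move 1)) :
    whitesIn 1 h b0 + whitesIn 1 h b1 = h.countP (fun x => x.1 == true) := by
  induction h with
  | nil => simp [whitesIn]
  | cons x t ih =>
    rcases x with ⟨c, b⟩
    rcases fin2 b with hb | hb <;> subst hb <;> cases c <;>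
      simp_all [whitesIn, List.countP_cons, b0, b1, Fin.ext_iff] <;> omega

lemma blacks_split (h : List (Move 1)) :
    blacksIn 1 h b0 + blacksIn 1 h b1 = h.countP (fun x => x.1 == false) := by
  induction h with
  | nil => simp [blacksIn]
  | cons x t ih =>
    rcases x with ⟨c, b⟩
    rcases fin2 b with hb | hb <;> subst hb <;> cases c <;>
      simp_all [blacksIn, List.countP_cons, b0, b1, Fin.ext_iff] <;> omega

lemma univ_fin2 : (Finset.univ : Finset (Fin (2*1))) = {b0, b1} := by decide

lemma card_filter_fin2 (p : Fin (2*1) → Prop) [DecidablePred p]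
    (hx : (p b0 ∧ ¬ p b1) ∨ (¬ p b0 ∧ p b1)) :
    (Finset.univ.filter p).card = 1 := by
  rw [univ_fin2]
  have e0 : (0 : Fin (2*1)) = b0 := rfl
  have e1 : (1 : Fin (2*1)) = b1 := rfl
  rcases hx with ⟨h1, h2⟩ | ⟨h1, h2⟩ <;>
    simp [Finset.filter_insert, Finset.filter_singleton, e0, e1, h1, h2]

lemma final_counts (m : ℕ) (h : List (Move 1)) (hok : ok m h)
    (hlen : h.length = 2*1*(2*m+1)) :
    majWhiteCount 1 m h = 1 ∧ majBlackCount 1 m h = 1 := by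
  obtain ⟨h1, h2, h3, h4⟩ := hok
  have hc := count_color h
  have hw : h.countP (fun x => x.1 == true) = 2*m+1 := by omega
  have hb : h.countP (fun x => x.1 == false) = 2*m+1 := by omega
  have hws := whites_split h
  have hbs := blacks_split h
  constructor
  · exact card_filter_fin2 _ (by omega)
  · exact card_filter_fin2 _ (by omega)

/-- In the `(1,m)`-balanced redistricting game (two bins of
capacity `2*m+1`, with `2*m+1` white and `2*m+1` black balls), Player 1 can
always guarantee at least one majority-white bin, and for every `m ≥ 1` the
game ends in a tie under optimal play: Player 2 can likewise guarantee at
least one majority-black bin, and when these strategies face each other each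
player wins exactly one bin. -/
theorem j_eq_one_tie (m : ℕ) (hm : 0 < m) :
    ∃ s1 s2 : Strat 1,
      (∀ s2' : Strat 1, p2Legal 1 m s1 s2' →
        p1Legal 1 m s1 s2' ∧ 1 ≤ majWhiteCount 1 m (finalHist 1 m s1 s2')) ∧
      (∀ s1' : Strat 1, p1Legal 1 m s1' s2 →
        p2Legal 1 m s1' s2 ∧ 1 ≤ majBlackCount 1 m (finalHist 1 m s1' s2)) ∧
      majWhiteCount 1 m (finalHist 1 m s1 s2) = 1 ∧
      majBlackCount 1 m (finalHist 1 m s1 s2) = 1 := by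
  refine ⟨greedy m, greedy m, ?_, ?_, ?_, ?_⟩
  · intro s2' hp2
    have H : ∀ n < 2*1*(2*m+1), ok m (hist 1 (greedy m) s2' n) →
        (hist 1 (greedy m) s2' n).length = n →
        legalMove 1 m (hist 1 (greedy m) s2' n)
          (if n % 2 = 0 then greedy m (hist 1 (greedy m) s2' n)
           else s2' (hist 1 (greedy m) s2' n)) := by
      intro n hn hok hlen
      by_cases hp : n % 2 = 0
      · rw [if_pos hp]; exact greedy_legal m _ hok (by omega)
      · rw [if_neg hp]; exact hp2 n hn (by omega)
    obtain ⟨hok, hlen, hleg⟩ := hist_ok m (greedy m) s2' H (2*1*(2*m+1)) le_rfl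
    constructor
    · intro n hn hpar
      have := hleg n hn
      rwa [if_pos hpar] at this
    · have := (final_counts m _ hok hlen).1
      show 1 ≤ majWhiteCount 1 m (hist 1 (greedy m) s2' (2*1*(2*m+1)))
      omega
  · intro s1' hp1
    have H : ∀ n < 2*1*(2*m+1), ok m (hist 1 s1' (greedy m) n) →
        (hist 1 s1' (greedy m) n).length = n →
        legalMove 1 m (hist 1 s1' (greedy m) n)
          (if n % 2 = 0 then s1' (hist 1 s1' (greedy m) n)
           else greedy m (hist 1 s1' (greedy m) n)) := by
      intro n hn hok hlen
      by_cases hp : n % 2 = 0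
      · rw [if_pos hp]; exact hp1 n hn hp
      · rw [if_neg hp]; exact greedy_legal m _ hok (by omega)
    obtain ⟨hok, hlen, hleg⟩ := hist_ok m s1' (greedy m) H (2*1*(2*m+1)) le_rfl
    constructor
    · intro n hn hpar
      have := hleg n hn
      rw [if_neg (by omega)] at this
      exact this
    · have := (final_counts m _ hok hlen).2
      show 1 ≤ majBlackCount 1 m (hist 1 s1' (greedy m) (2*1*(2*m+1)))
      omega
  · have H : ∀ n < 2*1*(2*m+1), ok m (hist 1 (greedy m) (greedy m) n) →
        (hist 1 (greedy m) (greedy m) n).length = n →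
        legalMove 1 m (hist 1 (greedy m) (greedy m) n)
          (if n % 2 = 0 then greedy m (hist 1 (greedy m) (greedy m) n)
           else greedy m (hist 1 (greedy m) (greedy m) n)) := by
      intro n hn hok hlen
      by_cases hp : n % 2 = 0 <;> [rw [if_pos hp]; rw [if_neg hp]] <;>
        exact greedy_legal m _ hok (by omega)
    obtain ⟨hok, hlen, _⟩ := hist_ok m (greedy m) (greedy m) H (2*1*(2*m+1)) le_rfl
    exact (final_counts m _ hok hlen).1
  · have H : ∀ n < 2*1*(2*m+1), ok m (hist 1 (greedy m) (greedy m) n) →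
        (hist 1 (greedy m) (greedy m) n).length = n →
        legalMove 1 m (hist 1 (greedy m) (greedy m) n)
          (if n % 2 = 0 then greedy m (hist 1 (greedy m) (greedy m) n)
           else greedy m (hist 1 (greedy m) (greedy m) n)) := by
      intro n hn hok hlen
      by_cases hp : n % 2 = 0 <;> [rw [if_pos hp]; rw [if_neg hp]] <;>
        exact greedy_legal m _ hok (by omega)
    obtain ⟨hok, hlen, _⟩ := hist_ok m (greedy m) (greedy m) H (2*1*(2*m+1)) le_rfl
    exact (final_counts m _ hok hlen).2
end

section
/- If at most j black balls have been played in total during the first r rounds and each round consists of one Player 1 move (always white) and one Player 2 move, then the total number of white balls residing in majority-white or empty bins after round r is at least 2r - 2j + 1, provided Player 1 has placed r+1 white balls into such bins. -/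
/-- Early-game counting bound.  After `r` rounds plus one
extra Player 1 move, `2*r+1` balls have been placed: Player 1 has placed `r+1`
white balls, and Player 2 has placed at most `j` black balls (the rest white).
A bin is majority-white if it holds strictly more white than black balls.
Then the total number of white balls residing in majority-white or empty bins
is at least `2*r - 2*j + 1`. -/
theorem early_game_whites (j r : ℕ) (hj : 0 < j)
    (w bl : Fin (2*j) → ℕ)
    (htotal : (∑ b, w b) + (∑ b, bl b) = 2*r + 1)
    (hblack : ∑ b, bl b ≤ j) :
    2*r + 1 ≤
      (∑ b ∈ Finset.univ.filter
        (fun b : Fin (2*j) => bl b < w b ∨ (w b = 0 ∧ bl b = 0)), w b) + 2*j := by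
  set P := fun b : Fin (2*j) => bl b < w b ∨ (w b = 0 ∧ bl b = 0) with hP
  have hsplit : (∑ b ∈ Finset.univ.filter P, w b)
      + (∑ b ∈ Finset.univ.filter (fun b => ¬ P b), w b) = ∑ b, w b :=
    Finset.sum_filter_add_sum_filter_not _ _ _
  have h1 : ∑ b ∈ Finset.univ.filter (fun b => ¬ P b), w b
      ≤ ∑ b ∈ Finset.univ.filter (fun b => ¬ P b), bl b := by
    apply Finset.sum_le_sum
    intro b hb
    simp only [Finset.mem_filter, hP] at hb
    omega
  have h2 : ∑ b ∈ Finset.univ.filter (fun b => ¬ P b), bl b ≤ ∑ b, bl b :=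
    Finset.sum_le_sum_of_subset (Finset.filter_subset _ _)
  have h3 : (∑ b ∈ Finset.univ.filter
      (fun b : Fin (2*j) => bl b < w b ∨ (w b = 0 ∧ bl b = 0)), w b)
      = ∑ b ∈ Finset.univ.filter P, w b := by
    apply Finset.sum_congr _ (fun _ _ => rfl)
    apply Finset.filter_congr
    intro b _
    simp [hP]
  omega
end
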